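/- Let M be an orientable non-degenerate hypersurface of an indefinite locally Riemannian product manifold, with induced (ε)-almost paracontact metric structure (φ, ξ, η, g). Then M is (ε)-para Sasakian if and only if its shape operator satisfies A = −εI + ε η⊗ξ. -/
import Mathlib


/-- Let `M` be an orientable non-degenerate hypersurface of an
indefinite locally Riemannian product manifold with induced (ε)-almost paracontact
metric structure `(φ, ξ, η, g)`; the induced connection satisfies
`(∇_X φ)Y = η(Y)AX + ε g(AX,Y)ξ` and `∇_X ξ = −φAX`. Then `M` is (ε)-para Sasakian
(i.e. `(∇_X φ)Y = −g(φX,φY)ξ − ε η(Y)φ²X`) iff `A = −εI + ε η⊗ξ`. -/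
theorem hypersurface_epsPS_iff_shape {V : Type*} [AddCommGroup V] [Module ℝ V]
    (φ : V →ₗ[ℝ] V) (ξ : V) (η : V →ₗ[ℝ] ℝ) (g : LinearMap.BilinForm ℝ V)
    (ε : ℝ) (hε : ε = 1 ∨ ε = -1)
    (hsym : ∀ X Y, g X Y = g Y X)
    (hnondeg : ∀ X, (∀ Y, g X Y = 0) → X = 0)
    (hφ2 : ∀ X, φ (φ X) = X - η X • ξ)
    (hηξ : η ξ = 1) (hφξ : φ ξ = 0) (hηφ : ∀ X, η (φ X) = 0)
    (hmetric : ∀ X Y, g (φ X) (φ Y) = g X Y - ε * η X * η Y)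
    (hgξ : ∀ X, g X ξ = ε * η X)
    (nabla : V → V → V) (A : V →ₗ[ℝ] V)
    (hAsym : ∀ X Y, g (A X) Y = g X (A Y))
    (hindφ : ∀ X Y, nabla X (φ Y) - φ (nabla X Y) = η Y • A X + (ε * g (A X) Y) • ξ)
    (hindξ : ∀ X, nabla X ξ = -φ (A X)) :
    (∀ X Y, nabla X (φ Y) - φ (nabla X Y) =
        -(g (φ X) (φ Y)) • ξ - (ε * η Y) • φ (φ X)) ↔
      (∀ X, A X = -ε • X + (ε * η X) • ξ) := by
  have hε2 : ε * ε = 1 := by rcases hε with h | h <;> simp [h]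
  constructor
  · intro h X
    have key : η ξ • A X + (ε * g (A X) ξ) • ξ =
        -(g (φ X) (φ ξ)) • ξ - (ε * η ξ) • φ (φ X) :=
      (hindφ X ξ).symm.trans (h X ξ)
    rw [hηξ, hφξ, hgξ, hφ2, map_zero, one_smul, mul_one] at key
    -- key : A X + (ε * (ε * η (A X))) • ξ = -0 • ξ - ε • (X - η X • ξ)
    have h2 := congrArg η key
    simp only [map_add, map_sub, map_smul, map_neg, map_zero, smul_eq_mul, hηξ,
      mul_one, neg_zero, zero_mul, mul_zero, sub_self, zero_sub] at h2
    -- derive η (A X) = 0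
    have hη : η (A X) = 0 := by nlinarith [hε2, h2, sq_nonneg ε]
    rw [hη, mul_zero, mul_zero, zero_smul, add_zero] at key
    rw [key]
    module
  · intro h X Y
    rw [hindφ, h X, hmetric, hφ2]
    have hgξ' : g ξ Y = ε * η Y := by rw [hsym, hgξ]
    simp only [map_add, map_smul, map_neg, LinearMap.add_apply, LinearMap.smul_apply,
      LinearMap.neg_apply, smul_eq_mul, hgξ']
    match_scalars
    · ring
    · linear_combination (-(g X) Y + ε * η X * η Y) * hε2
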